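/- Let ι : ℕ → ℝ be a strictly increasing sequence with ι(n) > 0 for all n and ι(n) → ∞, let a : ℕ → ℝ be nonnegative and not identically zero, and let A(x) := ∑_{n : ι(n) < x} a(n). Suppose the set {σ ∈ ℝ : ∑_{n} a(n)·(ι(n))^{-σ} converges} is nonempty and let σ_c be its infimum (the abscissa of convergence). If σ_c ≥ 0, then limsup_{x→∞} (log A(x))/(log x) = σ_c, and for every s ∈ ℂ with Re s > σ_c one has D(s) = s·∫_0^∞ x^{-s-1}·A(x) dx, where D(s) = ∑_{n=0}^∞ a(n)·(ι(n))^{-s}. -/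

import Mathlib

open Filter MeasureTheory

open Set Topology

lemma aux_finite {ι : ℕ → ℝ} (hιtop : Tendsto ι atTop atTop) (x : ℝ) :
    {n : ℕ | ι n < x}.Finite := by
  have h := hιtop.eventually (eventually_ge_atTop x)
  rw [← Nat.cofinite_eq_atTop, eventually_cofinite] at h
  simpa [not_le] using h

lemma aux_A_eq {ι : ℕ → ℝ} (hιtop : Tendsto ι atTop atTop) (a : ℕ → ℝ) (x : ℝ) :
    ∑ᶠ n ∈ {n : ℕ | ι n < x}, a n = ∑ n ∈ (aux_finite hιtop x).toFinset, a n := by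
  rw [← finsum_mem_coe_finset, (aux_finite hιtop x).coe_toFinset]

lemma aux_A_nonneg {ι : ℕ → ℝ} (hιtop : Tendsto ι atTop atTop) {a : ℕ → ℝ}
    (ha : ∀ n, 0 ≤ a n) (x : ℝ) : 0 ≤ ∑ᶠ n ∈ {n : ℕ | ι n < x}, a n := by
  rw [aux_A_eq hιtop]
  exact Finset.sum_nonneg fun n _ => ha n

lemma aux_A_mono {ι : ℕ → ℝ} (hιtop : Tendsto ι atTop atTop) {a : ℕ → ℝ}
    (ha : ∀ n, 0 ≤ a n) {x y : ℝ} (hxy : x ≤ y) :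
    ∑ᶠ n ∈ {n : ℕ | ι n < x}, a n ≤ ∑ᶠ n ∈ {n : ℕ | ι n < y}, a n := by
  rw [aux_A_eq hιtop, aux_A_eq hιtop]
  apply Finset.sum_le_sum_of_subset_of_nonneg
  · intro n hn
    simp only [Set.Finite.mem_toFinset, Set.mem_setOf_eq] at *
    exact lt_of_lt_of_le hn hxy
  · exact fun n _ _ => ha n

lemma aux_le_A {ι : ℕ → ℝ} (hιtop : Tendsto ι atTop atTop) {a : ℕ → ℝ}
    (ha : ∀ n, 0 ≤ a n) {m : ℕ} {x : ℝ} (hm : ι m < x) :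
    a m ≤ ∑ᶠ n ∈ {n : ℕ | ι n < x}, a n := by
  rw [aux_A_eq hιtop]
  apply Finset.single_le_sum (fun n _ => ha n)
  simpa using hm

lemma aux_summable_mono {ι : ℕ → ℝ} (hι : StrictMono ι) (hιpos : ∀ n, 0 < ι n)
    {a : ℕ → ℝ} (ha : ∀ n, 0 ≤ a n) {σ τ : ℝ}
    (hσ : Summable fun n => a n * ι n ^ (-σ)) (hστ : σ ≤ τ) :
    Summable fun n => a n * ι n ^ (-τ) := by
  refine Summable.of_nonneg_of_le
    (fun n => mul_nonneg (ha n) (Real.rpow_nonneg (hιpos n).le _)) ?_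
    (hσ.mul_left (ι 0 ^ (σ - τ)))
  · intro n
    have h1 : ι n ^ (-τ) = ι n ^ (σ - τ) * ι n ^ (-σ) := by
      rw [← Real.rpow_add (hιpos n)]; ring_nf
    have h2 : ι n ^ (σ - τ) ≤ ι 0 ^ (σ - τ) :=
      Real.rpow_le_rpow_of_nonpos (hιpos 0) (hι.monotone (Nat.zero_le n)) (by linarith)
    calc a n * ι n ^ (-τ) = (ι n ^ (σ - τ)) * (a n * ι n ^ (-σ)) := by rw [h1]; ring
    _ ≤ ι 0 ^ (σ - τ) * (a n * ι n ^ (-σ)) := by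
        apply mul_le_mul_of_nonneg_right h2
        exact mul_nonneg (ha n) (Real.rpow_nonneg (hιpos n).le _)

lemma aux_mem_of_gt {ι : ℕ → ℝ} (hι : StrictMono ι) (hιpos : ∀ n, 0 < ι n)
    {a : ℕ → ℝ} (ha : ∀ n, 0 ≤ a n)
    (hne : {σ : ℝ | Summable fun n => a n * ι n ^ (-σ)}.Nonempty)
    {σ : ℝ} (hσ : sInf {σ : ℝ | Summable fun n => a n * ι n ^ (-σ)} < σ) :
    Summable fun n => a n * ι n ^ (-σ) := by
  by_cases hb : BddBelow {σ : ℝ | Summable fun n => a n * ι n ^ (-σ)}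
  · obtain ⟨τ, hτ, hτσ⟩ := (csInf_lt_iff hb hne).mp hσ
    exact aux_summable_mono hι hιpos ha hτ hτσ.le
  · rw [not_bddBelow_iff] at hb
    obtain ⟨τ, hτ, hτσ⟩ := hb σ
    exact aux_summable_mono hι hιpos ha hτ hτσ.le

lemma aux_meas {a : ℕ → ℝ} {σ : ℝ} (c : ℝ) (n : ℕ) :
    Measurable ((Ioi c).indicator (fun y : ℝ => ENNReal.ofReal (a n * y ^ (-σ - 1)))) := by
  apply Measurable.indicator _ measurableSet_Ioi
  apply Measurable.ennreal_ofReal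
  fun_prop

lemma aux_per {ι : ℕ → ℝ} (hιpos : ∀ n, 0 < ι n) {a : ℕ → ℝ} (ha : ∀ n, 0 ≤ a n)
    {σ : ℝ} (hσ : 0 < σ) (n : ℕ) :
    ∫⁻ x in Ioi (0:ℝ),
      (Ioi (ι n)).indicator (fun y : ℝ => ENNReal.ofReal (a n * y ^ (-σ - 1))) x
        = ENNReal.ofReal (a n * ι n ^ (-σ)) * ENNReal.ofReal (1/σ) := by
  rw [lintegral_indicator measurableSet_Ioi, Measure.restrict_restrict measurableSet_Ioi,
    Set.inter_eq_left.mpr (Ioi_subset_Ioi (hιpos n).le)]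
  have hint : IntegrableOn (fun y : ℝ => a n * y ^ (-σ - 1)) (Ioi (ι n)) :=
    (integrableOn_Ioi_rpow_of_lt (by linarith) (hιpos n)).const_mul (a n)
  rw [← ofReal_integral_eq_lintegral_ofReal hint]
  · rw [MeasureTheory.integral_const_mul, integral_Ioi_rpow_of_lt (by linarith) (hιpos n)]
    have h1 : a n * (-ι n ^ (-σ - 1 + 1) / (-σ - 1 + 1)) = a n * ι n ^ (-σ) * (1/σ) := by
      rw [show -σ - 1 + 1 = -σ by ring]
      field_simp
    rw [h1, ENNReal.ofReal_mul (mul_nonneg (ha n) (Real.rpow_nonneg (hιpos n).le _))]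
  · filter_upwards [ae_restrict_mem measurableSet_Ioi] with y hy
    exact mul_nonneg (ha n) (Real.rpow_nonneg (le_of_lt ((hιpos n).trans hy)) _)

lemma aux_key {ι : ℕ → ℝ} (hιpos : ∀ n, 0 < ι n)
    (hιtop : Tendsto ι atTop atTop) {a : ℕ → ℝ} (ha : ∀ n, 0 ≤ a n) {σ : ℝ} (hσ : 0 < σ) :
    ∫⁻ x in Ioi (0:ℝ), ENNReal.ofReal (x ^ (-σ - 1) * ∑ᶠ n ∈ {n : ℕ | ι n < x}, a n)
      = (∑' n, ENNReal.ofReal (a n * ι n ^ (-σ))) * ENNReal.ofReal (1/σ) := by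
  have hpt : ∀ x ∈ Ioi (0:ℝ),
      ENNReal.ofReal (x ^ (-σ - 1) * ∑ᶠ n ∈ {n : ℕ | ι n < x}, a n)
        = ∑' n, (Ioi (ι n)).indicator (fun y : ℝ => ENNReal.ofReal (a n * y ^ (-σ - 1))) x := by
    intro x _
    rw [tsum_eq_sum (s := (aux_finite hιtop x).toFinset) ?h]
    · have : ∀ n ∈ (aux_finite hιtop x).toFinset,
          (Ioi (ι n)).indicator (fun y : ℝ => ENNReal.ofReal (a n * y ^ (-σ - 1))) x
            = ENNReal.ofReal (a n * x ^ (-σ - 1)) := by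
        intro n hn
        rw [Set.indicator_of_mem]
        simpa using hn
      rw [Finset.sum_congr rfl this, ← ENNReal.ofReal_sum_of_nonneg
        (fun n _ => mul_nonneg (ha n) (Real.rpow_nonneg (le_of_lt (by assumption)) _))]
      · congr 1
        rw [← Finset.sum_mul, aux_A_eq hιtop]
        ring
    · intro n hn
      apply Set.indicator_of_notMem
      simpa using hn
  rw [setLIntegral_congr_fun measurableSet_Ioi hpt,
    lintegral_tsum (fun n => (aux_meas _ n).aemeasurable)]
  simp_rw [aux_per hιpos ha hσ]
  rw [ENNReal.tsum_mul_right]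

lemma aux_tsum_ne_top {b : ℕ → ℝ} (hb : ∀ n, 0 ≤ b n) (hs : Summable b) :
    ∑' n, ENNReal.ofReal (b n) ≠ ⊤ := by
  rw [← ENNReal.ofReal_tsum_of_nonneg hb hs]
  exact ENNReal.ofReal_ne_top

lemma aux_summable_of_ne_top {b : ℕ → ℝ} (hb : ∀ n, 0 ≤ b n)
    (h : ∑' n, ENNReal.ofReal (b n) ≠ ⊤) : Summable b := by
  have := ENNReal.summable_toReal h
  refine this.congr fun n => ?_
  rw [ENNReal.toReal_ofReal (hb n)]

lemma aux_A_measurable {ι : ℕ → ℝ} (hιtop : Tendsto ι atTop atTop) {a : ℕ → ℝ}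
    (ha : ∀ n, 0 ≤ a n) :
    Measurable (fun x : ℝ => ∑ᶠ n ∈ {n : ℕ | ι n < x}, a n) :=
  Monotone.measurable (fun _ _ hxy => aux_A_mono hιtop ha hxy)

lemma aux_norm {s : ℂ} {x : ℝ} (hx : 0 < x) (c : ℝ) (hc : 0 ≤ c) :
    ‖(c : ℂ) * Complex.exp ((-s - 1) * (Real.log x : ℂ))‖ = c * x ^ (-s.re - 1) := by
  rw [norm_mul, Complex.norm_real, Complex.norm_exp, Real.norm_eq_abs, abs_of_nonneg hc]
  congr 1
  rw [mul_comm (-s - 1), Complex.re_ofReal_mul, Real.rpow_def_of_pos hx]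
  simp

lemma aux_part2 {ι : ℕ → ℝ} (hι : StrictMono ι) (hιpos : ∀ n, 0 < ι n)
    (hιtop : Tendsto ι atTop atTop) {a : ℕ → ℝ} (ha : ∀ n, 0 ≤ a n)
    (s : ℂ) (hs0 : 0 < s.re) (hsum : Summable fun n => a n * ι n ^ (-s.re)) :
    IntegrableOn
      (fun x : ℝ => Complex.exp ((-s - 1) * (Real.log x : ℂ)) * (∑ᶠ n ∈ {n : ℕ | ι n < x}, a n))
      (Set.Ioi (0 : ℝ)) ∧
    (∑' n : ℕ, (a n : ℂ) * Complex.exp (-s * (Real.log (ι n) : ℂ)))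
      = s * ∫ x in Set.Ioi (0 : ℝ),
          Complex.exp ((-s - 1) * (Real.log x : ℂ)) * (∑ᶠ n ∈ {n : ℕ | ι n < x}, a n) := by
  set σ := s.re with hσdef
  set A : ℝ → ℝ := fun x => ∑ᶠ n ∈ {n : ℕ | ι n < x}, a n with hA
  set F : ℝ → ℂ := fun x => Complex.exp ((-s - 1) * (Real.log x : ℂ)) * (A x) with hFdef
  have hFnorm : ∀ x ∈ Ioi (0:ℝ), ‖F x‖ = x ^ (-σ - 1) * A x := by
    intro x hx
    rw [hFdef]
    simp only
    rw [mul_comm, aux_norm hx _ (aux_A_nonneg hιtop ha x), mul_comm]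
  have hmeasexp : Measurable fun x : ℝ => Complex.exp ((-s - 1) * (Real.log x : ℂ)) :=
    Complex.measurable_exp.comp ((Complex.measurable_ofReal.comp Real.measurable_log).const_mul _)
  have hFmeas : Measurable F :=
    hmeasexp.mul (Complex.measurable_ofReal.comp (aux_A_measurable hιtop ha))
  have hsum' : ∑' n, ENNReal.ofReal (a n * ι n ^ (-σ)) ≠ ⊤ :=
    aux_tsum_ne_top (fun n => mul_nonneg (ha n) (Real.rpow_nonneg (hιpos n).le _)) hsum
  have hInt : IntegrableOn F (Ioi (0:ℝ)) := by
    refine ⟨hFmeas.aestronglyMeasurable, ?_⟩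
    rw [hasFiniteIntegral_iff_norm]
    have : ∫⁻ x in Ioi (0:ℝ), ENNReal.ofReal ‖F x‖
        = ∫⁻ x in Ioi (0:ℝ), ENNReal.ofReal (x ^ (-σ - 1) * A x) := by
      apply setLIntegral_congr_fun measurableSet_Ioi
      exact fun x hx => by rw [hFnorm x hx]
    rw [this, aux_key hιpos hιtop ha hs0]
    exact ENNReal.mul_lt_top hsum'.lt_top ENNReal.ofReal_lt_top
  refine ⟨hInt, ?_⟩
  set f : ℕ → ℝ → ℂ := fun n =>
    (Ioi (ι n)).indicator (fun y => (a n : ℂ) * Complex.exp ((-s - 1) * (Real.log y : ℂ)))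
    with hfdef
  have hptsum : ∀ x ∈ Ioi (0:ℝ), ∑' n, f n x = F x := by
    intro x hx
    rw [tsum_eq_sum (s := (aux_finite hιtop x).toFinset) ?h]
    · have : ∀ n ∈ (aux_finite hιtop x).toFinset,
          f n x = (a n : ℂ) * Complex.exp ((-s - 1) * (Real.log x : ℂ)) := by
        intro n hn
        rw [hfdef]
        simp only
        rw [Set.indicator_of_mem]
        simpa using hn
      rw [Finset.sum_congr rfl this, ← Finset.sum_mul, hFdef]
      simp only
      rw [mul_comm, hA]
      simp only
      rw [aux_A_eq hιtop]
      push_cast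
      ring
    · intro n hn
      apply Set.indicator_of_notMem
      simpa using hn
  have hfmeas : ∀ n, AEStronglyMeasurable (f n) (volume.restrict (Ioi (0:ℝ))) := by
    intro n
    exact ((measurable_const.mul hmeasexp).indicator measurableSet_Ioi).aestronglyMeasurable
  have hfnorm : ∀ n, ∫⁻ x in Ioi (0:ℝ), ‖f n x‖₊
      = ENNReal.ofReal (a n * ι n ^ (-σ)) * ENNReal.ofReal (1/σ) := by
    intro n
    rw [← aux_per hιpos ha hs0 n]
    apply setLIntegral_congr_fun measurableSet_Ioi
    intro x hx
    by_cases hmem : x ∈ Ioi (ι n)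
    · rw [hfdef]
      simp only
      rw [Set.indicator_of_mem hmem, Set.indicator_of_mem hmem, ← enorm_eq_nnnorm, ← ofReal_norm,
        aux_norm hx _ (ha n)]
    · rw [hfdef]
      simp only
      rw [Set.indicator_of_notMem hmem, Set.indicator_of_notMem hmem]
      simp
  have hfsum : ∑' n, ∫⁻ x in Ioi (0:ℝ), ‖f n x‖₊ ≠ ⊤ := by
    rw [tsum_congr hfnorm, ENNReal.tsum_mul_right]
    exact ENNReal.mul_ne_top hsum' ENNReal.ofReal_ne_top
  have hswap := MeasureTheory.integral_tsum hfmeas hfsum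
  have hIF : ∫ x in Ioi (0:ℝ), F x = ∑' n, ∫ x in Ioi (0:ℝ), f n x := by
    rw [← hswap]
    apply setIntegral_congr_fun measurableSet_Ioi
    intro x hx
    exact (hptsum x hx).symm
  have hne : s ≠ 0 := by
    intro h
    rw [hσdef, h] at hs0
    simp at hs0
  have hint_n : ∀ n, ∫ x in Ioi (0:ℝ), f n x = (a n : ℂ) * ((ι n : ℂ) ^ (-s) / s) := by
    intro n
    rw [hfdef]
    simp only
    rw [integral_indicator measurableSet_Ioi, Measure.restrict_restrict measurableSet_Ioi,
      Set.inter_eq_left.mpr (Ioi_subset_Ioi (hιpos n).le), MeasureTheory.integral_const_mul]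
    congr 1
    have hcongr : ∀ x ∈ Ioi (ι n),
        Complex.exp ((-s - 1) * (Real.log x : ℂ)) = (x : ℂ) ^ (-s - 1) := by
      intro x hx
      have hx0 : (0:ℝ) < x := (hιpos n).trans hx
      rw [Complex.cpow_def_of_ne_zero (by exact_mod_cast hx0.ne'),
        ← Complex.ofReal_log hx0.le, mul_comm]
    rw [setIntegral_congr_fun measurableSet_Ioi hcongr,
      integral_Ioi_cpow_of_lt (by rw [Complex.sub_re, Complex.neg_re, Complex.one_re]; linarith) (hιpos n)]
    rw [show -s - 1 + 1 = -s by ring]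
    rw [div_eq_div_iff]
    · ring
    · simpa using hne
    · exact hne
  rw [hIF, tsum_congr hint_n, ← tsum_mul_left]
  apply tsum_congr
  intro n
  have : (ι n : ℂ) ^ (-s) = Complex.exp (-s * (Real.log (ι n) : ℂ)) := by
    rw [Complex.cpow_def_of_ne_zero (by exact_mod_cast (hιpos n).ne'),
      ← Complex.ofReal_log (hιpos n).le, mul_comm]
  rw [← this]
  field_simp

lemma aux_A_zero {ι : ℕ → ℝ} (hι : StrictMono ι) (hιtop : Tendsto ι atTop atTop)
    (a : ℕ → ℝ) {x : ℝ} (hx : x ≤ ι 0) : ∑ᶠ n ∈ {n : ℕ | ι n < x}, a n = 0 := by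
  have : {n : ℕ | ι n < x} = ∅ := by
    ext n
    simp only [Set.mem_setOf_eq, Set.mem_empty_iff_false, iff_false, not_lt]
    exact le_trans hx (hι.monotone (Nat.zero_le n))
  rw [this]
  exact finsum_mem_empty

lemma aux_A_le {ι : ℕ → ℝ} (hιpos : ∀ n, 0 < ι n) (hιtop : Tendsto ι atTop atTop)
    {a : ℕ → ℝ} (ha : ∀ n, 0 ≤ a n) {σ : ℝ}
    (hσ : Summable fun n => a n * ι n ^ (-σ)) (hσ0 : 0 ≤ σ) {x : ℝ} (hx : 0 < x) :
    (∑ᶠ n ∈ {n : ℕ | ι n < x}, a n) ≤ (∑' n, a n * ι n ^ (-σ)) * x ^ σ := by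
  rw [aux_A_eq hιtop]
  calc ∑ n ∈ (aux_finite hιtop x).toFinset, a n
      ≤ ∑ n ∈ (aux_finite hιtop x).toFinset, (a n * ι n ^ (-σ)) * x ^ σ := by
        apply Finset.sum_le_sum
        intro n hn
        have hlt : ι n < x := by simpa using hn
        have h1 : (1:ℝ) ≤ ι n ^ (-σ) * x ^ σ := by
          rw [Real.rpow_neg (hιpos n).le, ← div_eq_inv_mul, le_div_iff₀ (Real.rpow_pos_of_pos (hιpos n) σ), one_mul]
          exact Real.rpow_le_rpow (hιpos n).le hlt.le hσ0
        calc a n = a n * 1 := (mul_one _).symm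
        _ ≤ a n * (ι n ^ (-σ) * x ^ σ) := mul_le_mul_of_nonneg_left h1 (ha n)
        _ = a n * ι n ^ (-σ) * x ^ σ := by ring
    _ = (∑ n ∈ (aux_finite hιtop x).toFinset, a n * ι n ^ (-σ)) * x ^ σ :=
        (Finset.sum_mul _ _ _).symm
    _ ≤ (∑' n, a n * ι n ^ (-σ)) * x ^ σ := by
        apply mul_le_mul_of_nonneg_right _ (Real.rpow_nonneg hx.le σ)
        exact Summable.sum_le_tsum _ (fun n _ => mul_nonneg (ha n) (Real.rpow_nonneg (hιpos n).le _)) hσ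

lemma aux_summable_of_A_le {ι : ℕ → ℝ} (hι : StrictMono ι) (hιpos : ∀ n, 0 < ι n)
    (hιtop : Tendsto ι atTop atTop) {a : ℕ → ℝ} (ha : ∀ n, 0 ≤ a n)
    {σ σ' X0 : ℝ} (hσ'0 : 0 < σ') (hσσ' : σ < σ') (hX0 : 0 < X0)
    (hbound : ∀ x ≥ X0, (∑ᶠ n ∈ {n : ℕ | ι n < x}, a n) ≤ x ^ σ) :
    Summable fun n => a n * ι n ^ (-σ') := by
  apply aux_summable_of_ne_top (fun n => mul_nonneg (ha n) (Real.rpow_nonneg (hιpos n).le _))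
  have hkey := aux_key hιpos hιtop ha hσ'0
  have hfin : ∫⁻ x in Ioi (0:ℝ),
      ENNReal.ofReal (x ^ (-σ' - 1) * ∑ᶠ n ∈ {n : ℕ | ι n < x}, a n) < ⊤ := by
    rw [show Ioi (0:ℝ) = Ioc 0 X0 ∪ Ioi X0 from (Ioc_union_Ioi_eq_Ioi hX0.le).symm,
      lintegral_union measurableSet_Ioi (Ioc_disjoint_Ioi le_rfl)]
    apply ENNReal.add_lt_top.mpr
    constructor
    · set M := ∑ᶠ n ∈ {n : ℕ | ι n < X0}, a n with hM
      set K := ENNReal.ofReal (ι 0 ^ (-σ' - 1) * M) with hK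
      calc ∫⁻ x in Ioc (0:ℝ) X0,
            ENNReal.ofReal (x ^ (-σ' - 1) * ∑ᶠ n ∈ {n : ℕ | ι n < x}, a n)
          ≤ ∫⁻ _ in Ioc (0:ℝ) X0, K := by
            apply setLIntegral_mono' measurableSet_Ioc
            intro x hx
            by_cases hxι : x ≤ ι 0
            · rw [aux_A_zero hι hιtop a hxι]
              simp
            · push_neg at hxι
              apply ENNReal.ofReal_le_ofReal
              apply mul_le_mul
              · exact Real.rpow_le_rpow_of_nonpos (hιpos 0) hxι.le (by linarith)
              · exact aux_A_mono hιtop ha hx.2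
              · exact aux_A_nonneg hιtop ha x
              · exact Real.rpow_nonneg (hιpos 0).le _
        _ = K * volume (Ioc (0:ℝ) X0) := setLIntegral_const _ _
        _ < ⊤ := ENNReal.mul_lt_top ENNReal.ofReal_lt_top (by simp [Real.volume_Ioc])
    · calc ∫⁻ x in Ioi X0,
            ENNReal.ofReal (x ^ (-σ' - 1) * ∑ᶠ n ∈ {n : ℕ | ι n < x}, a n)
          ≤ ∫⁻ x in Ioi X0, ENNReal.ofReal (x ^ (σ - σ' - 1)) := by
            apply setLIntegral_mono' measurableSet_Ioi
            intro x hx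
            apply ENNReal.ofReal_le_ofReal
            have hx0 : (0:ℝ) < x := hX0.trans hx
            calc x ^ (-σ' - 1) * (∑ᶠ n ∈ {n : ℕ | ι n < x}, a n)
                ≤ x ^ (-σ' - 1) * x ^ σ :=
                  mul_le_mul_of_nonneg_left (hbound x hx.le) (Real.rpow_nonneg hx0.le _)
              _ = x ^ (σ - σ' - 1) := by
                  rw [← Real.rpow_add hx0]
                  ring_nf
        _ < ⊤ := by
            rw [← ofReal_integral_eq_lintegral_ofReal
              (integrableOn_Ioi_rpow_of_lt (by linarith) hX0)
              (by filter_upwards [ae_restrict_mem measurableSet_Ioi] with y hy;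
                  exact Real.rpow_nonneg (le_of_lt (hX0.trans hy)) _)]
            exact ENNReal.ofReal_lt_top
  rw [hkey] at hfin
  intro htop
  rw [htop, ENNReal.top_mul (ENNReal.ofReal_pos.mpr (by positivity)).ne'] at hfin
  exact (lt_irrefl _ hfin)

lemma aux_limsup {ι : ℕ → ℝ} (hι : StrictMono ι) (hιpos : ∀ n, 0 < ι n)
    (hιtop : Tendsto ι atTop atTop)
    {a : ℕ → ℝ} (ha : ∀ n, 0 ≤ a n) (hane : ∃ n, a n ≠ 0)
    (hne : {σ : ℝ | Summable fun n => a n * ι n ^ (-σ)}.Nonempty)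
    (hσc : 0 ≤ sInf {σ : ℝ | Summable fun n => a n * ι n ^ (-σ)}) :
    limsup (fun x : ℝ => Real.log (∑ᶠ n ∈ {n : ℕ | ι n < x}, a n) / Real.log x) atTop
        = sInf {σ : ℝ | Summable fun n => a n * ι n ^ (-σ)} := by
  obtain ⟨n0, hn00⟩ := hane
  have hn0 : 0 < a n0 := lt_of_le_of_ne (ha n0) (Ne.symm hn00)
  set A : ℝ → ℝ := fun x => ∑ᶠ n ∈ {n : ℕ | ι n < x}, a n with hA
  set F : ℝ → ℝ := fun x => Real.log (A x) / Real.log x with hF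
  set S : Set ℝ := {σ : ℝ | Summable fun n => a n * ι n ^ (-σ)} with hS
  set L : ℝ := sInf S with hL
  have hApos : ∀ᶠ x : ℝ in atTop, a n0 ≤ A x := by
    filter_upwards [eventually_gt_atTop (ι n0)] with x hx
    exact aux_le_A hιtop ha hx
  have hlogpos : ∀ᶠ x : ℝ in atTop, 0 < Real.log x := by
    filter_upwards [eventually_gt_atTop 1] with x hx
    exact Real.log_pos hx
  have hgtend : Tendsto (fun x : ℝ => Real.log (a n0) / Real.log x) atTop (𝓝 0) :=
    tendsto_const_nhds.div_atTop Real.tendsto_log_atTop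
  have hgF : (fun x : ℝ => Real.log (a n0) / Real.log x) ≤ᶠ[atTop] F := by
    filter_upwards [hApos, hlogpos] with x h1 h2
    exact (div_le_div_iff_of_pos_right h2).mpr (Real.log_le_log hn0 h1)
  have hub : ∀ σ, 0 ≤ σ → (Summable fun n => a n * ι n ^ (-σ)) →
      F ≤ᶠ[atTop] fun x => σ + Real.log (∑' n, a n * ι n ^ (-σ)) / Real.log x := by
    intro σ hσ0 hσS
    have hC : 0 < ∑' n, a n * ι n ^ (-σ) := by
      have h1 : 0 < a n0 * ι n0 ^ (-σ) := mul_pos hn0 (Real.rpow_pos_of_pos (hιpos n0) _)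
      exact lt_of_lt_of_le h1
        (Summable.le_tsum hσS n0 fun m _ => mul_nonneg (ha m) (Real.rpow_nonneg (hιpos m).le _))
    filter_upwards [hApos, hlogpos, eventually_gt_atTop 0] with x h1 h2 h3
    have hA0 : 0 < A x := lt_of_lt_of_le hn0 h1
    have hAle := aux_A_le hιpos hιtop ha hσS hσ0 h3
    rw [hF]
    simp only
    rw [div_le_iff₀ h2]
    have hlog : Real.log (A x) ≤ Real.log ((∑' n, a n * ι n ^ (-σ)) * x ^ σ) :=
      Real.log_le_log hA0 hAle
    calc Real.log (A x) ≤ Real.log (∑' n, a n * ι n ^ (-σ)) + σ * Real.log x := by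
          rw [Real.log_mul hC.ne' (Real.rpow_pos_of_pos h3 σ).ne', Real.log_rpow h3] at hlog
          linarith
      _ = (σ + Real.log (∑' n, a n * ι n ^ (-σ)) / Real.log x) * Real.log x := by
          field_simp
          ring
  have hubtend : ∀ (σ C : ℝ), Tendsto (fun x : ℝ => σ + Real.log C / Real.log x) atTop (𝓝 σ) := by
    intro σ C
    have h := (tendsto_const_nhds (α := ℝ) (f := atTop) (x := σ)).add
      ((tendsto_const_nhds (α := ℝ) (f := atTop) (x := Real.log C)).div_atTop
        Real.tendsto_log_atTop)
    simpa using h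
  obtain ⟨σ0, hσ0S⟩ := id hne
  have hσmax : Summable fun n => a n * ι n ^ (-(max σ0 0)) :=
    aux_summable_mono hι hιpos ha hσ0S (le_max_left _ _)
  have hFabove : IsBoundedUnder (· ≤ ·) atTop F :=
    ((hubtend _ _).isBoundedUnder_le).mono_le (hub (max σ0 0) (le_max_right _ _) hσmax)
  have hFbelow : IsBoundedUnder (· ≥ ·) atTop F :=
    (hgtend.isBoundedUnder_ge).mono_ge hgF
  have h0le : 0 ≤ limsup F atTop := by
    have h := limsup_le_limsup hgF (hgtend.isBoundedUnder_ge.isCoboundedUnder_le) hFabove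
    rwa [hgtend.limsup_eq] at h
  have hle : limsup F atTop ≤ L := by
    apply le_of_forall_gt_imp_ge_of_dense
    intro σ hσ
    have hσ0 : 0 ≤ σ := le_trans hσc hσ.le
    have hσS : Summable fun n => a n * ι n ^ (-σ) := aux_mem_of_gt hι hιpos ha hne hσ
    calc limsup F atTop
        ≤ limsup (fun x => σ + Real.log (∑' n, a n * ι n ^ (-σ)) / Real.log x) atTop :=
          limsup_le_limsup (hub σ hσ0 hσS) (hFbelow.isCoboundedUnder_le)
            ((hubtend _ _).isBoundedUnder_le)
      _ = σ := (hubtend _ _).limsup_eq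
  refine le_antisymm hle ?_
  by_contra hlt
  push_neg at hlt
  set ℓ := limsup F atTop with hℓ
  set σ := ℓ + (L - ℓ)/3 with hσdef
  set σ' := ℓ + 2*(L - ℓ)/3 with hσ'def
  have hσℓ : ℓ < σ := by rw [hσdef]; linarith
  have hσσ' : σ < σ' := by rw [hσdef, hσ'def]; linarith
  have hσ'L : σ' < L := by rw [hσ'def]; linarith
  have hσ'0 : 0 < σ' := by rw [hσ'def]; linarith
  have hev : ∀ᶠ x : ℝ in atTop, F x < σ := eventually_lt_of_limsup_lt hσℓ hFabove
  have hbound : ∀ᶠ x : ℝ in atTop, A x ≤ x ^ σ := by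
    filter_upwards [hev, hApos, hlogpos, eventually_gt_atTop 0] with x h1 h2 h3 h4
    have hA0 : 0 < A x := lt_of_lt_of_le hn0 h2
    have hlt2 : Real.log (A x) < σ * Real.log x := by
      rw [hF] at h1
      simp only at h1
      calc Real.log (A x) = Real.log (A x) / Real.log x * Real.log x := by field_simp
        _ < σ * Real.log x := mul_lt_mul_of_pos_right h1 h3
    calc A x = Real.exp (Real.log (A x)) := (Real.exp_log hA0).symm
      _ ≤ Real.exp (σ * Real.log x) := Real.exp_le_exp.mpr hlt2.le
      _ = x ^ σ := by rw [Real.rpow_def_of_pos h4, mul_comm]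
  obtain ⟨X0, hX0⟩ := eventually_atTop.mp hbound
  have hsum2 : Summable fun n => a n * ι n ^ (-σ') :=
    aux_summable_of_A_le hι hιpos hιtop ha hσ'0 hσσ'
      (lt_of_lt_of_le zero_lt_one (le_max_right X0 1))
      (fun x hx => hX0 x (le_trans (le_max_left X0 1) hx))
  have hmem : σ' ∈ S := hsum2
  by_cases hb : BddBelow S
  · have hLσ' : L ≤ σ' := csInf_le hb hmem
    linarith
  · have hL0 : L = 0 := Real.sInf_of_not_bddBelow hb
    linarith

/-- If the abscissa of convergence `σ_c` of a generalized Dirichlet series with nonnegative,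
not identically zero coefficients satisfies `σ_c ≥ 0`, then
`limsup_{x→∞} log A(x) / log x = σ_c` and for `Re s > σ_c` one has
`D(s) = s·∫_0^∞ x^{-s-1} A(x) dx`. -/
theorem stmt_5 (ι : ℕ → ℝ) (hι : StrictMono ι) (hιpos : ∀ n, 0 < ι n)
    (hιtop : Tendsto ι atTop atTop)
    (a : ℕ → ℝ) (ha : ∀ n, 0 ≤ a n) (hane : ∃ n, a n ≠ 0)
    (hne : {σ : ℝ | Summable fun n => a n * ι n ^ (-σ)}.Nonempty)
    (hσc : 0 ≤ sInf {σ : ℝ | Summable fun n => a n * ι n ^ (-σ)}) :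
    limsup (fun x : ℝ => Real.log (∑ᶠ n ∈ {n : ℕ | ι n < x}, a n) / Real.log x) atTop
        = sInf {σ : ℝ | Summable fun n => a n * ι n ^ (-σ)} ∧
    ∀ s : ℂ, sInf {σ : ℝ | Summable fun n => a n * ι n ^ (-σ)} < s.re →
      IntegrableOn
        (fun x : ℝ => Complex.exp ((-s - 1) * (Real.log x : ℂ)) * (∑ᶠ n ∈ {n : ℕ | ι n < x}, a n))
        (Set.Ioi (0 : ℝ)) ∧
      (∑' n : ℕ, (a n : ℂ) * Complex.exp (-s * (Real.log (ι n) : ℂ)))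
        = s * ∫ x in Set.Ioi (0 : ℝ),
            Complex.exp ((-s - 1) * (Real.log x : ℂ)) * (∑ᶠ n ∈ {n : ℕ | ι n < x}, a n) := by
  constructor
  · exact aux_limsup hι hιpos hιtop ha hane hne hσc
  · intro s hs
    have hs0 : 0 < s.re := lt_of_le_of_lt hσc hs
    have hsum : Summable fun n => a n * ι n ^ (-s.re) := aux_mem_of_gt hι hιpos ha hne hs
    exact aux_part2 hι hιpos hιtop ha s hs0 hsum
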